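/- Let Φ be a Bernstein function with Φ ≢ 0 and let R(r) be the Mellin transform of the remainder variable (the unique log-convex solution of R(1)=1, R(r+1)=Φ(r)R(r)). Then for every r > 0, R(r) = lim_{n→∞} [∏_{j=0}^{n-1} Φ(j+1)/Φ(j+r)] · Φ(n)^{r-1}. -/

import Mathlib

open MeasureTheory Real Set Filter

/-- A Bernstein function, null at 0: `Φ s = a s + ∫ (1 - exp (-s x)) λ(dx)`
with `a ≥ 0` and `λ` a measure on `(0,∞)` with `∫ (x ∧ 1) λ(dx) < ∞`. -/
def IsBernstein (Φ : ℝ → ℝ) : Prop :=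
  ∃ (a : ℝ) (lam : Measure ℝ), 0 ≤ a ∧ lam (Iic 0) = 0 ∧
    (∫⁻ x, ENNReal.ofReal (min x 1) ∂lam) < ⊤ ∧
    ∀ s ≥ (0 : ℝ), Φ s = a * s + ∫ x, (1 - Real.exp (-s * x)) ∂lam

/-- A subordinator (increasing Lévy process started at 0) with
Laplace–Bernstein exponent `Φ`: stationary independent increments and
`E[exp (-s ξ_l)] = exp (-l Φ(s))`. -/
structure IsSubordinator {Ω : Type*} [MeasurableSpace Ω] (P : Measure Ω)
    (ξ : ℝ → Ω → ℝ) (Φ : ℝ → ℝ) : Prop where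
  isProb : IsProbabilityMeasure P
  meas : ∀ l, Measurable (ξ l)
  zero : ∀ᵐ ω ∂P, ξ 0 ω = 0
  mono : ∀ᵐ ω ∂P, MonotoneOn (fun l => ξ l ω) (Ici 0)
  indep : ∀ (n : ℕ) (t : Fin (n + 1) → ℝ), (∀ i, 0 ≤ t i) → Monotone t →
    ProbabilityTheory.iIndepFun
      (fun i : Fin n => fun ω => ξ (t i.succ) ω - ξ (t i.castSucc) ω) P
  laplace : ∀ t ≥ (0 : ℝ), ∀ l ≥ (0 : ℝ), ∀ s ≥ (0 : ℝ),
    ∫ ω, Real.exp (-s * (ξ (t + l) ω - ξ t ω)) ∂P = Real.exp (-l * Φ s)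

/-- The perpetuity `I = ∫₀^∞ exp (-ξ_l) dl` of a subordinator. -/
noncomputable def perpetuity {Ω : Type*} (ξ : ℝ → Ω → ℝ) (ω : Ω) : ℝ :=
  ∫ l in Ioi (0 : ℝ), Real.exp (-ξ l ω)

/-- The Mellin transform `r ↦ E[X^(r-1)]` of a positive random variable. -/
noncomputable def mellinT {Ω : Type*} [MeasurableSpace Ω] (P : Measure Ω)
    (X : Ω → ℝ) (r : ℝ) : ℝ := ∫ ω, X ω ^ (r - 1) ∂P


/-- convexity of exp at `-T` and `0`. -/
lemma exp_combo_aux (c T : ℝ) (hc : 0 ≤ c) (hc1 : c ≤ 1) :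
    Real.exp (-(c*T)) ≤ 1 - c + c * Real.exp (-T) := by
  have h := convexOn_exp.2 (Set.mem_univ (-T)) (Set.mem_univ (0:ℝ))
      hc (by linarith : (0:ℝ) ≤ 1 - c) (by ring)
  simp only [smul_eq_mul, mul_zero, add_zero, Real.exp_zero, mul_one] at h
  calc Real.exp (-(c*T)) = Real.exp (c * -T) := by ring_nf
    _ ≤ c * Real.exp (-T) + (1 - c) := h
    _ = 1 - c + c * Real.exp (-T) := by ring

lemma one_sub_exp_nonneg {t : ℝ} (ht : 0 ≤ t) : 0 ≤ 1 - Real.exp (-t) := by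
  have : Real.exp (-t) ≤ 1 := Real.exp_le_one_iff.mpr (by linarith)
  linarith

lemma one_sub_exp_le {t : ℝ} : 1 - Real.exp (-t) ≤ t := by
  have := Real.add_one_le_exp (-t); linarith

lemma bern_integrable {lam : Measure ℝ} (hlam0 : lam (Iic 0) = 0)
    (hfin : (∫⁻ x, ENNReal.ofReal (min x 1) ∂lam) < ⊤) {s : ℝ} (hs : 0 ≤ s) :
    Integrable (fun x => 1 - Real.exp (-s * x)) lam := by
  have hae : ∀ᵐ x ∂lam, 0 < x := by
    rw [ae_iff]
    convert hlam0 using 2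
    ext x; simp [not_lt]
  refine ⟨(Continuous.aestronglyMeasurable (by continuity)), ?_⟩
  rw [HasFiniteIntegral]
  calc ∫⁻ x, ‖1 - Real.exp (-s * x)‖₊ ∂lam
      ≤ ∫⁻ x, ENNReal.ofReal (max s 1) * ENNReal.ofReal (min x 1) ∂lam := by
        refine lintegral_mono_ae (hae.mono fun x hx => ?_)
        have hx0 : 0 ≤ x := hx.le
        have h1 : 0 ≤ 1 - Real.exp (-s * x) := by
          have : -s*x = -(s*x) := by ring
          rw [this]; exact one_sub_exp_nonneg (mul_nonneg hs hx0)
        have h2 : 1 - Real.exp (-s * x) ≤ max s 1 * min x 1 := by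
          rcases le_total x 1 with hx1 | hx1
          · have : 1 - Real.exp (-s*x) ≤ s * x := by
              have : -s*x = -(s*x) := by ring
              rw [this]; exact one_sub_exp_le
            have hmin : min x 1 = x := min_eq_left hx1
            rw [hmin]
            calc 1 - Real.exp (-s*x) ≤ s * x := this
              _ ≤ max s 1 * x := by
                  exact mul_le_mul_of_nonneg_right (le_max_left s 1) hx0
          · have hmin : min x 1 = 1 := min_eq_right hx1
            rw [hmin, mul_one]
            have : Real.exp (-s*x) > 0 := Real.exp_pos _
            calc 1 - Real.exp (-s*x) ≤ 1 := by linarith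
              _ ≤ max s 1 := le_max_right s 1
        rw [← ENNReal.ofReal_mul (le_trans hs (le_max_left s 1))]
        calc (‖1 - Real.exp (-s * x)‖₊ : ENNReal) = ENNReal.ofReal (1 - Real.exp (-s*x)) := by
              rw [← enorm_eq_nnnorm, ← ofReal_norm, Real.norm_of_nonneg h1]
          _ ≤ ENNReal.ofReal (max s 1 * min x 1) := ENNReal.ofReal_le_ofReal h2
    _ = ENNReal.ofReal (max s 1) * ∫⁻ x, ENNReal.ofReal (min x 1) ∂lam := by
        rw [lintegral_const_mul']
        exact ENNReal.ofReal_ne_top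
    _ < ⊤ := ENNReal.mul_lt_top ENNReal.ofReal_lt_top hfin

lemma bern_ratio {Φ : ℝ → ℝ} {a : ℝ} {lam : Measure ℝ} (hlam0 : lam (Iic 0) = 0)
    (hfin : (∫⁻ x, ENNReal.ofReal (min x 1) ∂lam) < ⊤)
    (hrep : ∀ s ≥ (0:ℝ), Φ s = a * s + ∫ x, (1 - Real.exp (-s * x)) ∂lam)
    {u v : ℝ} (hu : 0 < u) (huv : u ≤ v) :
    u * Φ v ≤ v * Φ u := by
  have hv : 0 < v := lt_of_lt_of_le hu huv
  have hae : ∀ᵐ x ∂lam, 0 < x := by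
    rw [ae_iff]; convert hlam0 using 2; ext x; simp [not_lt]
  have hiu := bern_integrable hlam0 hfin hu.le
  have hiv := bern_integrable hlam0 hfin hv.le
  have hmono : ∫ x, u * (1 - Real.exp (-v * x)) ∂lam
      ≤ ∫ x, v * (1 - Real.exp (-u * x)) ∂lam := by
    refine integral_mono_ae (hiv.const_mul u) (hiu.const_mul v)
      (hae.mono fun x hx => ?_)
    have key := exp_combo_aux (u/v) (v*x) (div_nonneg hu.le hv.le)
      ((div_le_one hv).mpr huv)
    have h1 : u/v*(v*x) = u*x := by field_simp
    rw [h1] at key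
    have h2 : v * Real.exp (-(u*x)) ≤ v * (1 - u/v + u/v * Real.exp (-(v*x))) :=
      mul_le_mul_of_nonneg_left key hv.le
    have h3 : v * (1 - u/v + u/v * Real.exp (-(v*x))) = v - u + u * Real.exp (-(v*x)) := by
      field_simp
    have h4 : -u * x = -(u*x) := by ring
    have h5 : -v * x = -(v*x) := by ring
    simp only
    rw [h4, h5]; rw [h3] at h2; nlinarith
  rw [integral_const_mul, integral_const_mul] at hmono
  rw [hrep u hu.le, hrep v hv.le, mul_add, mul_add]
  nlinarith [hmono]

lemma bern_mono {Φ : ℝ → ℝ} {a : ℝ} {lam : Measure ℝ} (ha : 0 ≤ a)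
    (hlam0 : lam (Iic 0) = 0)
    (hfin : (∫⁻ x, ENNReal.ofReal (min x 1) ∂lam) < ⊤)
    (hrep : ∀ s ≥ (0:ℝ), Φ s = a * s + ∫ x, (1 - Real.exp (-s * x)) ∂lam)
    {u v : ℝ} (hu : 0 ≤ u) (huv : u ≤ v) :
    Φ u ≤ Φ v := by
  have hv : 0 ≤ v := le_trans hu huv
  have hae : ∀ᵐ x ∂lam, 0 < x := by
    rw [ae_iff]; convert hlam0 using 2; ext x; simp [not_lt]
  have hmono : ∫ x, (1 - Real.exp (-u * x)) ∂lam ≤ ∫ x, (1 - Real.exp (-v * x)) ∂lam := by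
    refine integral_mono_ae (bern_integrable hlam0 hfin hu) (bern_integrable hlam0 hfin hv)
      (hae.mono fun x hx => ?_)
    have : -v * x ≤ -u * x := by nlinarith
    have := Real.exp_le_exp.mpr this
    simp only; linarith
  rw [hrep u hu, hrep v hv]
  have : a * u ≤ a * v := mul_le_mul_of_nonneg_left huv ha
  linarith

/-- Asymptotic formula for the Mellin transform of the remainder:
`R(r) = lim_n [∏_{j=0}^{n-1} Φ(j+1)/Φ(j+r)] Φ(n)^{r-1}`. -/

theorem remainder_mellin_limit
    (Φ : ℝ → ℝ) (hΦ : IsBernstein Φ) (hΦne : ∃ s > (0 : ℝ), Φ s ≠ 0)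
    (R : ℝ → ℝ) (hRpos : ∀ r > (0 : ℝ), 0 < R r) (hR1 : R 1 = 1)
    (hReq : ∀ r > (0 : ℝ), R (r + 1) = Φ r * R r)
    (hRconv : ConvexOn ℝ (Ioi 0) (fun r => Real.log (R r))) :
    ∀ r > (0 : ℝ),
      Tendsto (fun n : ℕ =>
          (∏ j ∈ Finset.range n, Φ ((j : ℝ) + 1) / Φ ((j : ℝ) + r)) * Φ n ^ (r - 1))
        atTop (nhds (R r)) := by
  obtain ⟨a, lam, ha, hlam0, hfin, hrep⟩ := hΦ
  have hΦpos : ∀ r > (0:ℝ), 0 < Φ r := by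
    intro r hr
    have h := hReq r hr
    have h1 : 0 < R (r+1) := hRpos _ (by linarith)
    have h2 : 0 < R r := hRpos _ hr
    by_contra h'
    push_neg at h'
    nlinarith
  set g : ℝ → ℝ := fun r => Real.log (R r) with hg
  have hlogΦ : ∀ r > (0:ℝ), Real.log (Φ r) = g (r+1) - g r := by
    intro r hr
    have h := hReq r hr
    have : g (r+1) = Real.log (Φ r) + Real.log (R r) := by
      rw [hg]; simp only; rw [h, Real.log_mul (hΦpos r hr).ne' (hRpos r hr).ne']
    rw [this]; ring
  -- product formula
  have hprod : ∀ s > (0:ℝ), ∀ n : ℕ,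
      (∏ j ∈ Finset.range n, Φ ((j:ℝ) + s)) = R ((n:ℝ) + s) / R s := by
    intro s hs n
    induction n with
    | zero => simp [div_self (hRpos s hs).ne']
    | succ n ih =>
      rw [Finset.prod_range_succ, ih]
      have h1 : (0:ℝ) < (n:ℝ) + s := by positivity
      have h2 := hReq ((n:ℝ)+s) h1
      have h3 : ((n:ℕ) + 1 : ℕ) = ((n:ℝ) + 1 : ℝ) := by push_cast; ring
      push_cast
      rw [show ((n:ℝ)+1+s) = ((n:ℝ)+s)+1 by ring, h2]
      field_simp
  have hratio : ∀ r > (0:ℝ), ∀ n : ℕ,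
      (∏ j ∈ Finset.range n, Φ ((j:ℝ)+1) / Φ ((j:ℝ)+r))
        = R ((n:ℝ)+1) * R r / R ((n:ℝ)+r) := by
    intro r hr n
    have h1 := (hRpos r hr).ne'
    have h2 := (hRpos ((n:ℝ)+r) (by positivity)).ne'
    rw [Finset.prod_div_distrib, hprod 1 one_pos n, hprod r hr n, hR1, div_one]
    field_simp
  have hΦratio : ∀ {u v : ℝ}, 0 < u → u ≤ v → u * Φ v ≤ v * Φ u :=
    fun hu huv => bern_ratio hlam0 hfin hrep hu huv
  have hΦmono : ∀ {u v : ℝ}, 0 ≤ u → u ≤ v → Φ u ≤ Φ v :=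
    fun hu huv => bern_mono ha hlam0 hfin hrep hu huv
  -- ratio of Φ tends to 1
  have hΦr1 : ∀ s > (0:ℝ),
      Tendsto (fun n : ℕ => Φ (n:ℝ) / Φ ((n:ℝ)+s)) atTop (nhds 1) := by
    intro s hs
    have hlow : Tendsto (fun n : ℕ => (n:ℝ)/((n:ℝ)+s)) atTop (nhds 1) := by
      have h1 : Tendsto (fun n : ℕ => ((n:ℝ)+s)) atTop atTop :=
        tendsto_atTop_add_const_right _ s tendsto_natCast_atTop_atTop
      have h2 : Tendsto (fun n : ℕ => s/((n:ℝ)+s)) atTop (nhds 0) :=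
        Tendsto.div_atTop tendsto_const_nhds h1
      have h3 : Tendsto (fun n : ℕ => 1 - s/((n:ℝ)+s)) atTop (nhds 1) := by
        simpa using tendsto_const_nhds.sub h2
      refine h3.congr' ?_
      filter_upwards [eventually_ge_atTop 1] with n hn
      have hn' : (0:ℝ) < (n:ℝ) := by exact_mod_cast hn
      field_simp; ring
    refine tendsto_of_tendsto_of_tendsto_of_le_of_le' hlow tendsto_const_nhds ?_ ?_
    · filter_upwards [eventually_ge_atTop 1] with n hn
      have hn' : (0:ℝ) < (n:ℝ) := by exact_mod_cast hn
      have h0 : 0 < Φ ((n:ℝ)+s) := hΦpos _ (by positivity)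
      have := hΦratio hn' (le_add_of_nonneg_right hs.le)
      rw [div_le_div_iff₀ (by positivity) h0]
      linarith
    · filter_upwards [eventually_ge_atTop 1] with n hn
      have hn' : (0:ℝ) < (n:ℝ) := by exact_mod_cast hn
      have h0 : 0 < Φ ((n:ℝ)+s) := hΦpos _ (by positivity)
      have := hΦmono hn'.le (le_add_of_nonneg_right hs.le)
      rw [div_le_one h0]
      exact this
  -- base case : 0 < r ≤ 1
  have key : ∀ r, 0 < r → r ≤ 1 →
      Tendsto (fun n : ℕ =>
          (∏ j ∈ Finset.range n, Φ ((j : ℝ) + 1) / Φ ((j : ℝ) + r)) * Φ n ^ (r - 1))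
        atTop (nhds (R r)) := by
    intro r hr hr1
    set E : ℕ → ℝ := fun n => g ((n:ℝ)+1) - g ((n:ℝ)+r) + (r-1) * Real.log (Φ (n:ℝ)) with hE
    have hbound : ∀ n : ℕ, 1 ≤ n → 0 ≤ E n ∧ E n ≤ (1-r) * (r / (n:ℝ)) := by
      intro n hn
      have hN : (1:ℝ) ≤ (n:ℝ) := by exact_mod_cast hn
      have hN0 : (0:ℝ) < (n:ℝ) := by linarith
      set N := (n:ℝ)
      have hi : g (N+r) ≤ (1-r) * g N + r * g (N+1) := by
        have h := hRconv.2 (show N ∈ Ioi (0:ℝ) from hN0)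
          (show N+1 ∈ Ioi (0:ℝ) from by simp only [mem_Ioi]; linarith)
          (by linarith : (0:ℝ) ≤ 1-r) hr.le (by ring)
        simpa [smul_eq_mul, show (1-r)*N + r*(N+1) = N+r by ring] using h
      have hii : g (N+1) ≤ r * g (N+r) + (1-r) * g (N+r+1) := by
        have h := hRconv.2 (show N+r ∈ Ioi (0:ℝ) from by simp only [mem_Ioi]; linarith)
          (show N+r+1 ∈ Ioi (0:ℝ) from by simp only [mem_Ioi]; linarith)
          hr.le (by linarith : (0:ℝ) ≤ 1-r) (by ring)
        simpa [smul_eq_mul, show r*(N+r) + (1-r)*(N+r+1) = N+1 by ring] using h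
      have hl1 : Real.log (Φ N) = g (N+1) - g N := hlogΦ N hN0
      have hl2 : Real.log (Φ (N+r)) = g (N+r+1) - g (N+r) := hlogΦ (N+r) (by linarith)
      constructor
      · rw [hE]; simp only [hl1]; nlinarith
      · have hlog : Real.log (Φ (N+r)) - Real.log (Φ N) ≤ r / N := by
          have h1 : N * Φ (N+r) ≤ (N+r) * Φ N := hΦratio hN0 (by linarith)
          have h2 : 0 < Φ N := hΦpos N hN0
          have h3 : 0 < Φ (N+r) := hΦpos (N+r) (by linarith)
          have h4 : Φ (N+r) / Φ N ≤ (N+r)/N := by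
            rw [div_le_div_iff₀ h2 hN0]; linarith
          have h5 : Real.log (Φ (N+r) / Φ N) ≤ Real.log ((N+r)/N) :=
            Real.log_le_log (by positivity) h4
          rw [Real.log_div h3.ne' h2.ne'] at h5
          have h6 : Real.log ((N+r)/N) ≤ (N+r)/N - 1 :=
            Real.log_le_sub_one_of_pos (by positivity)
          have h7 : (N+r)/N - 1 = r/N := by field_simp; ring
          linarith
        rw [hE]; simp only [hl1]
        nlinarith [hlog, hii, hl2]
    have hE0 : Tendsto E atTop (nhds 0) := by
      have hub : Tendsto (fun n : ℕ => (1-r) * (r/(n:ℝ))) atTop (nhds 0) := by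
        simpa using (tendsto_const_div_atTop_nhds_zero_nat r).const_mul (1-r)
      refine tendsto_of_tendsto_of_tendsto_of_le_of_le' tendsto_const_nhds hub ?_ ?_
      · filter_upwards [eventually_ge_atTop 1] with n hn; exact (hbound n hn).1
      · filter_upwards [eventually_ge_atTop 1] with n hn; exact (hbound n hn).2
    have heq : ∀ n : ℕ, 1 ≤ n →
        (∏ j ∈ Finset.range n, Φ ((j : ℝ) + 1) / Φ ((j : ℝ) + r)) * Φ (n:ℝ) ^ (r - 1)
          = R r * Real.exp (E n) := by
      intro n hn
      have hN0 : (0:ℝ) < (n:ℝ) := by exact_mod_cast Nat.lt_of_lt_of_le Nat.zero_lt_one hn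
      have h1 : 0 < R ((n:ℝ)+1) := hRpos _ (by linarith)
      have h2 : 0 < R ((n:ℝ)+r) := hRpos _ (by linarith)
      have h3 : 0 < Φ (n:ℝ) := hΦpos _ hN0
      rw [hratio r hr n]
      rw [hE]
      simp only
      rw [Real.exp_add, Real.exp_sub, Real.exp_log h1, Real.exp_log h2]
      rw [Real.rpow_def_of_pos h3]
      ring
    have : Tendsto (fun n : ℕ => R r * Real.exp (E n)) atTop (nhds (R r)) := by
      have := (Real.continuous_exp.tendsto 0).comp hE0
      simpa using tendsto_const_nhds.mul this
    refine this.congr' ?_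
    filter_upwards [eventually_ge_atTop 1] with n hn
    exact (heq n hn).symm
  -- inductive step
  have step : ∀ s > (0:ℝ),
      Tendsto (fun n : ℕ =>
          (∏ j ∈ Finset.range n, Φ ((j : ℝ) + 1) / Φ ((j : ℝ) + s)) * Φ n ^ (s - 1))
        atTop (nhds (R s)) →
      Tendsto (fun n : ℕ =>
          (∏ j ∈ Finset.range n, Φ ((j : ℝ) + 1) / Φ ((j : ℝ) + (s+1))) * Φ n ^ ((s+1) - 1))
        atTop (nhds (R (s+1))) := by
    intro s hs hind
    have heq : ∀ n : ℕ, 1 ≤ n →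
        (∏ j ∈ Finset.range n, Φ ((j : ℝ) + 1) / Φ ((j : ℝ) + (s+1))) * Φ (n:ℝ) ^ ((s+1) - 1)
        = ((∏ j ∈ Finset.range n, Φ ((j : ℝ) + 1) / Φ ((j : ℝ) + s)) * Φ (n:ℝ) ^ (s - 1))
          * (Φ s * (Φ (n:ℝ) / Φ ((n:ℝ)+s))) := by
      intro n hn
      have hN0 : (0:ℝ) < (n:ℝ) := by exact_mod_cast Nat.lt_of_lt_of_le Nat.zero_lt_one hn
      have h3 : 0 < Φ (n:ℝ) := hΦpos _ hN0
      have h4 : 0 < Φ ((n:ℝ)+s) := hΦpos _ (by linarith)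
      have h5 : 0 < R ((n:ℝ)+s) := hRpos _ (by linarith)
      have h6 : 0 < R s := hRpos _ hs
      have h7 : 0 < R ((n:ℝ)+1) := hRpos _ (by linarith)
      rw [hratio (s+1) (by linarith) n, hratio s hs n]
      have e1 : R (s+1) = Φ s * R s := hReq s hs
      have e2 : R ((n:ℝ)+(s+1)) = Φ ((n:ℝ)+s) * R ((n:ℝ)+s) := by
        rw [show (n:ℝ)+(s+1) = ((n:ℝ)+s)+1 by ring]
        exact hReq _ (by linarith)
      have e3 : Φ (n:ℝ) ^ ((s+1)-1) = Φ (n:ℝ) ^ (s-1) * Φ (n:ℝ) := by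
        rw [show (s+1)-1 = (s-1)+1 by ring, Real.rpow_add h3, Real.rpow_one]
      rw [e1, e2, e3]
      field_simp
    have htend : Tendsto (fun n : ℕ =>
        ((∏ j ∈ Finset.range n, Φ ((j : ℝ) + 1) / Φ ((j : ℝ) + s)) * Φ (n:ℝ) ^ (s - 1))
          * (Φ s * (Φ (n:ℝ) / Φ ((n:ℝ)+s)))) atTop (nhds (R (s+1))) := by
      have h2 := (tendsto_const_nhds (x := Φ s) (f := atTop (α := ℕ))).mul (hΦr1 s hs)
      have h3 := hind.mul h2
      rw [hReq s hs] at *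
      simpa [mul_comm] using h3
    refine htend.congr' ?_
    filter_upwards [eventually_ge_atTop 1] with n hn
    exact (heq n hn).symm
  -- assemble
  have main : ∀ k : ℕ, ∀ t, 0 < t → t ≤ 1 →
      Tendsto (fun n : ℕ =>
          (∏ j ∈ Finset.range n, Φ ((j : ℝ) + 1) / Φ ((j : ℝ) + (t+(k:ℝ)))) * Φ n ^ ((t+(k:ℝ)) - 1))
        atTop (nhds (R (t+(k:ℝ)))) := by
    intro k
    induction k with
    | zero => intro t ht ht1; simpa using key t ht ht1
    | succ k ih =>
      intro t ht ht1
      have h1 := step (t+(k:ℝ)) (by positivity) (ih t ht ht1)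
      have h2 : t + ((k:ℝ)+1) = (t+(k:ℝ))+1 := by ring
      push_cast
      rw [h2]
      exact h1
  intro r hr
  have hk1 : 1 ≤ ⌈r⌉₊ := Nat.one_le_ceil_iff.mpr hr
  set k : ℕ := ⌈r⌉₊ - 1 with hk
  have hkc : (k:ℝ) = (⌈r⌉₊:ℝ) - 1 := by
    rw [hk]; push_cast [Nat.cast_sub hk1]; ring
  set t : ℝ := r - (k:ℝ) with ht
  have ht0 : 0 < t := by
    rw [ht, hkc]
    have := Nat.ceil_lt_add_one hr.le
    linarith
  have ht1 : t ≤ 1 := by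
    rw [ht, hkc]
    have := Nat.le_ceil r
    linarith
  have hrt : r = t + (k:ℝ) := by rw [ht]; ring
  rw [hrt]
  exact main k t ht0 ht1
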